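/- arXiv:2504.10461 — 3 statements merged into one kernel-verified Lean document; each statement's English description precedes it below -/
import Mathlib

section
/- Let A_cl ∈ ℝ^{n×n} be Schur stable and λ ∈ (0, 1/2) be such that A_{cl,λ} := (1/√(1−2λ)) A_cl is also Schur stable. Let Q ⪰ 0 satisfy A_{cl,λ}ᵀ Cᵀ C A_{cl,λ} − Cᵀ C ⪯ Q, and let N be the unique positive definite solution of the discrete Lyapunov equation A_{cl,λ}ᵀ N A_{cl,λ} − N = −Q (assuming Q ≻ 0). Then M := N + Cᵀ C is positive definite, satisfies M ⪰ Cᵀ C, and satisfies A_clᵀ M A_cl − M ⪯ −2λ M. -/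
open Matrix

/-- A real square matrix is Schur stable if all of its (complex) eigenvalues
have modulus strictly less than one. -/
def SchurStable {n : ℕ} (A : Matrix (Fin n) (Fin n) ℝ) : Prop :=
  ∀ μ ∈ spectrum ℂ (A.map (Complex.ofReal)), ‖μ‖ < 1

lemma posSemidef_smul {n : ℕ} {X : Matrix (Fin n) (Fin n) ℝ} (hX : X.PosSemidef)
    {c : ℝ} (hc : 0 ≤ c) : (c • X).PosSemidef := by
  refine ⟨?_, fun x => ?_⟩
  · simpa [Matrix.IsHermitian] using congrArg (c • ·) hX.1
  · have h := mul_nonneg hc (hX.2 x)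
    simp only [Matrix.smul_apply, smul_eq_mul, star_trivial] at h ⊢
    simp_rw [show ∀ a b d : ℝ, a * (c * b) * d = c * (a * b * d) by intros; ring,
      ← Finsupp.mul_sum]
    exact h

/-- the Lyapunov-equation construction of `M = N + CᵀC`. -/
theorem stmt_3 {n p : ℕ}
    (A_cl : Matrix (Fin n) (Fin n) ℝ) (C : Matrix (Fin p) (Fin n) ℝ)
    (l : ℝ) (hl0 : 0 < l) (hl : l < 1 / 2)
    (hA : SchurStable A_cl)
    (A_cll : Matrix (Fin n) (Fin n) ℝ)
    (hA_cll : A_cll = (1 / Real.sqrt (1 - 2 * l)) • A_cl)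
    (hAl : SchurStable A_cll)
    (Q : Matrix (Fin n) (Fin n) ℝ) (hQ : Q.PosDef)
    (hQup : (Q - (A_cllᵀ * (Cᵀ * C) * A_cll - Cᵀ * C)).PosSemidef)
    (N : Matrix (Fin n) (Fin n) ℝ) (hN : N.PosDef)
    (hLyap : A_cllᵀ * N * A_cll - N = -Q) :
    (N + Cᵀ * C).PosDef ∧
    ((N + Cᵀ * C) - Cᵀ * C).PosSemidef ∧
    ((-(2 * l)) • (N + Cᵀ * C) -
      (A_clᵀ * (N + Cᵀ * C) * A_cl - (N + Cᵀ * C))).PosSemidef := by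
  have hCtC : (Cᵀ * C).PosSemidef := by
    simpa using posSemidef_conjTranspose_mul_self C
  have hs : (0 : ℝ) < 1 - 2 * l := by linarith
  have hsqrt : Real.sqrt (1 - 2 * l) ≠ 0 := by positivity
  have hAcl : A_cl = Real.sqrt (1 - 2 * l) • A_cll := by
    rw [hA_cll, smul_smul]
    field_simp
    exact (one_smul _ _).symm
  refine ⟨hN.add_posSemidef hCtC, by simpa using hN.posSemidef, ?_⟩
  have h2 : Real.sqrt (1 - 2 * l) * Real.sqrt (1 - 2 * l) = 1 - 2 * l :=
    Real.mul_self_sqrt (le_of_lt hs)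
  have hQeq : Q = N - A_cllᵀ * N * A_cll := by
    have h := congrArg (fun M => -M) hLyap
    simpa [neg_sub] using h.symm
  have hprod : A_clᵀ * (N + Cᵀ * C) * A_cl
      = (1 - 2 * l) • (A_cllᵀ * (N + Cᵀ * C) * A_cll) := by
    rw [hAcl, transpose_smul, Matrix.smul_mul, Matrix.mul_smul, Matrix.smul_mul,
      smul_smul, h2]
  have key : (-(2 * l)) • (N + Cᵀ * C) -
      (A_clᵀ * (N + Cᵀ * C) * A_cl - (N + Cᵀ * C)) =
      (1 - 2 * l) • (Q - (A_cllᵀ * (Cᵀ * C) * A_cll - Cᵀ * C)) := by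
    rw [hprod, hQeq, mul_add, add_mul]
    module
  rw [key]
  exact posSemidef_smul hQup (le_of_lt hs)
end

section
/- Under the hypotheses of Theorem 1, with λ ∈ (0,1/2), for all (x̄, x) and all ū: V(x̄⁺, x⁺) − V(x̄, x) ≤ −(λ/(1−λ)) (V(x̄, x) − γ²‖ū‖²), where x̄⁺, x⁺ are the one-step updates under inputs ū and u_L(ū, x̄, x) respectively. -/
open Matrix

noncomputable def eunorm {n : ℕ} (v : Fin n → ℝ) : ℝ :=
  ‖(WithLp.equiv 2 (Fin n → ℝ)).symm v‖

/-- The old `Matrix.PosSemidef.sqrt` (removed from Mathlib), spelled out with its old definition. -/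
noncomputable def posSemidefSqrt {n : ℕ} {A : Matrix (Fin n) (Fin n) ℝ} (hA : A.PosSemidef) :
    Matrix (Fin n) (Fin n) ℝ :=
  (hA.1.eigenvectorUnitary : Matrix (Fin n) (Fin n) ℝ) * diagonal (Real.sqrt ∘ hA.1.eigenvalues) *
    (star hA.1.eigenvectorUnitary : Matrix (Fin n) (Fin n) ℝ)

noncomputable def specNorm {m n : ℕ} (A : Matrix (Fin m) (Fin n) ℝ) : ℝ :=
  ‖LinearMap.toContinuousLinearMap (Matrix.toEuclideanLin A)‖

set_option maxHeartbeats 1000000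

lemma eunorm_sq {n : ℕ} (v : Fin n → ℝ) : eunorm v ^ 2 = v ⬝ᵥ v := by
  rw [eunorm, ← real_inner_self_eq_norm_sq]
  simp [PiLp.inner_apply, dotProduct, RCLike.inner_apply, mul_comm]
  rw [EuclideanSpace.norm_eq, Real.sq_sqrt (by positivity)]; simp [sq]

lemma eunorm_nonneg {n : ℕ} (v : Fin n → ℝ) : 0 ≤ eunorm v := norm_nonneg _

lemma eunorm_mulVec_le {m n : ℕ} (A : Matrix (Fin m) (Fin n) ℝ) (v : Fin n → ℝ) :
    eunorm (A.mulVec v) ≤ specNorm A * eunorm v := by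
  have h := (LinearMap.toContinuousLinearMap (Matrix.toEuclideanLin A)).le_opNorm
      ((WithLp.equiv 2 (Fin n → ℝ)).symm v)
  simpa [eunorm, specNorm, Matrix.toEuclideanLin_apply_piLp_toLp] using h

lemma posSemidefSqrt_transpose {n : ℕ} {A : Matrix (Fin n) (Fin n) ℝ} (hA : A.PosSemidef) :
    (posSemidefSqrt hA)ᵀ = posSemidefSqrt hA := by
  simp [posSemidefSqrt, Matrix.transpose_mul, Matrix.star_eq_conjTranspose,
    Matrix.conjTranspose_eq_transpose_of_trivial, Matrix.mul_assoc]

lemma posSemidefSqrt_mul_self {n : ℕ} {A : Matrix (Fin n) (Fin n) ℝ} (hA : A.PosSemidef) :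
    posSemidefSqrt hA * posSemidefSqrt hA = A := by
  have hU : (star hA.1.eigenvectorUnitary : Matrix (Fin n) (Fin n) ℝ) *
      (hA.1.eigenvectorUnitary : Matrix (Fin n) (Fin n) ℝ) = 1 :=
    Unitary.star_mul_self_of_mem hA.1.eigenvectorUnitary.2
  have hD : diagonal (Real.sqrt ∘ hA.1.eigenvalues) * diagonal (Real.sqrt ∘ hA.1.eigenvalues)
      = diagonal (RCLike.ofReal ∘ hA.1.eigenvalues) := by
    rw [diagonal_mul_diagonal]
    congr 1; funext i
    simp [Real.mul_self_sqrt (hA.eigenvalues_nonneg i)]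
  conv_rhs => rw [hA.1.spectral_theorem, Unitary.conjStarAlgAut_apply]
  simp only [posSemidefSqrt, Matrix.mul_assoc]
  rw [← Matrix.mul_assoc (star _ : Matrix (Fin n) (Fin n) ℝ) _ _, hU, Matrix.one_mul,
    ← Matrix.mul_assoc (diagonal _) (diagonal _), hD]

lemma psd_nonneg {n : ℕ} {N : Matrix (Fin n) (Fin n) ℝ} (h : N.PosSemidef)
    (v : Fin n → ℝ) : 0 ≤ v ⬝ᵥ N.mulVec v := by
  simpa using h.dotProduct_mulVec_nonneg v


/-- quantitative one-step decrease
`V⁺ − V ≤ −(λ/(1−λ))(V − γ²‖ū‖²)` under the hypotheses of Theorem 1. -/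
theorem stmt_10 {n nb m mb p : ℕ}
    (A_L : Matrix (Fin n) (Fin n) ℝ) (B_L : Matrix (Fin n) (Fin m) ℝ)
    (C : Matrix (Fin p) (Fin n) ℝ)
    (Ab_L : Matrix (Fin nb) (Fin nb) ℝ) (Bb_L : Matrix (Fin nb) (Fin mb) ℝ)
    (Cb : Matrix (Fin p) (Fin nb) ℝ)
    (M : Matrix (Fin n) (Fin n) ℝ) (hM : M.PosDef)
    (K : Matrix (Fin m) (Fin n) ℝ) (l : ℝ) (hl0 : 0 < l) (hl : l < 1 / 2)
    (hcontr : ((-(2 * l)) • M -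
      ((A_L + B_L * K)ᵀ * M * (A_L + B_L * K) - M)).PosSemidef)
    (hMC : (M - Cᵀ * C).PosSemidef)
    (P : Matrix (Fin n) (Fin nb) ℝ) (Q : Matrix (Fin m) (Fin nb) ℝ)
    (hCP : C * P = Cb) (hPA : P * Ab_L = A_L * P + B_L * Q)
    (R : Matrix (Fin m) (Fin mb) ℝ)
    (V : (Fin nb → ℝ) → (Fin n → ℝ) → ℝ)
    (hV : ∀ xb x, V xb x = (x - P.mulVec xb) ⬝ᵥ M.mulVec (x - P.mulVec xb))
    (u_L : (Fin mb → ℝ) → (Fin nb → ℝ) → (Fin n → ℝ) → (Fin m → ℝ))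
    (hu_L : ∀ ub xb x, u_L ub xb x =
      R.mulVec ub + Q.mulVec xb + K.mulVec (x - P.mulVec xb))
    (γ : ℝ)
    (hγ : γ = Real.sqrt (1 - l) / l * specNorm (posSemidefSqrt hM.posSemidef * (B_L * R - P * Bb_L))) :
    ∀ (xb : Fin nb → ℝ) (x : Fin n → ℝ) (ub : Fin mb → ℝ),
      V (Ab_L.mulVec xb + Bb_L.mulVec ub)
          (A_L.mulVec x + B_L.mulVec (u_L ub xb x)) - V xb x ≤
        -(l / (1 - l)) * (V xb x - γ ^ 2 * eunorm ub ^ 2) := by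
  intro xb x ub
  have h1l : (0:ℝ) < 1 - l := by linarith
  set F : Matrix (Fin n) (Fin n) ℝ := A_L + B_L * K with hF
  set D : Matrix (Fin n) (Fin mb) ℝ := B_L * R - P * Bb_L with hD
  set S : Matrix (Fin n) (Fin n) ℝ := posSemidefSqrt hM.posSemidef with hS
  set e : Fin n → ℝ := x - P.mulVec xb with he
  set w1 : Fin n → ℝ := F.mulVec e with hw1
  set w2 : Fin n → ℝ := D.mulVec ub with hw2
  -- symmetry of M
  have hMt : Mᵀ = M := by
    have := hM.posSemidef.1
    simpa [Matrix.IsHermitian, Matrix.conjTranspose_eq_transpose_of_trivial] using this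
  have hsymm : ∀ a b : Fin n → ℝ, a ⬝ᵥ M.mulVec b = b ⬝ᵥ M.mulVec a := by
    intro a b
    rw [Matrix.dotProduct_mulVec, ← Matrix.mulVec_transpose, hMt, dotProduct_comm]
  -- the error dynamics
  have hkey : (A_L.mulVec x + B_L.mulVec (u_L ub xb x)) -
      P.mulVec (Ab_L.mulVec xb + Bb_L.mulVec ub) = w1 + w2 := by
    rw [hu_L, hw1, hw2, hF, hD, he]
    have hPAv : P.mulVec (Ab_L.mulVec xb) =
        A_L.mulVec (P.mulVec xb) + B_L.mulVec (Q.mulVec xb) := by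
      rw [Matrix.mulVec_mulVec, hPA, Matrix.add_mulVec, ← Matrix.mulVec_mulVec,
        ← Matrix.mulVec_mulVec]
    simp only [Matrix.mulVec_add, Matrix.mulVec_sub, Matrix.add_mulVec, Matrix.sub_mulVec,
      ← Matrix.mulVec_mulVec, hPAv]
    abel
  -- V at next step
  have hVp : V (Ab_L.mulVec xb + Bb_L.mulVec ub) (A_L.mulVec x + B_L.mulVec (u_L ub xb x)) =
      (w1 + w2) ⬝ᵥ M.mulVec (w1 + w2) := by rw [hV, hkey]
  set q1 : ℝ := w1 ⬝ᵥ M.mulVec w1 with hq1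
  set q2 : ℝ := w2 ⬝ᵥ M.mulVec w2 with hq2
  set c12 : ℝ := w1 ⬝ᵥ M.mulVec w2 with hc12
  have hexp : (w1 + w2) ⬝ᵥ M.mulVec (w1 + w2) = q1 + 2 * c12 + q2 := by
    rw [hq1, hq2, hc12]
    simp only [Matrix.mulVec_add, dotProduct_add, add_dotProduct]
    rw [hsymm w2 w1]; ring
  -- Young's inequality from PSD of M
  have hyoung : 0 ≤ l^2 * q1 - 2 * (l * (1 - l)) * c12 + (1 - l)^2 * q2 := by
    have h := psd_nonneg hM.posSemidef (l • w1 - (1 - l) • w2)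
    simp only [Matrix.mulVec_sub, Matrix.mulVec_smul, sub_dotProduct,
      dotProduct_sub, smul_dotProduct, dotProduct_smul,
      smul_eq_mul] at h
    rw [hsymm w2 w1] at h
    nlinarith [h]
  -- contraction bound : q1 ≤ (1-2l) V
  have hA1 : q1 ≤ (1 - 2*l) * (e ⬝ᵥ M.mulVec e) := by
    have h := psd_nonneg hcontr e
    have hFq : e ⬝ᵥ (Fᵀ * M * F).mulVec e = q1 := by
      rw [hq1, hw1]
      rw [← Matrix.mulVec_mulVec, ← Matrix.mulVec_mulVec,
        Matrix.dotProduct_mulVec e Fᵀ, Matrix.vecMul_transpose]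
    simp only [Matrix.sub_mulVec, Matrix.smul_mulVec, dotProduct_sub,
      dotProduct_smul, smul_eq_mul] at h
    rw [hFq] at h
    nlinarith [h]
  -- spectral bound : q2 ≤ N² ‖ub‖²
  set N : ℝ := specNorm (S * D) with hN
  have hB2 : q2 ≤ N^2 * eunorm ub ^ 2 := by
    have hSS : S * S = M := posSemidefSqrt_mul_self _
    have hSt : Sᵀ = S := by
      exact posSemidefSqrt_transpose _
    have hq2' : q2 = eunorm ((S * D).mulVec ub) ^ 2 := by
      rw [eunorm_sq, hq2, ← hSS, ← Matrix.mulVec_mulVec, Matrix.dotProduct_mulVec w2 S,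
        Matrix.mulVec_mulVec]
      rw [show w2 ᵥ* S = S.mulVec w2 by rw [← Matrix.mulVec_transpose, hSt], hw2,
        Matrix.mulVec_mulVec]
    rw [hq2']
    have h := eunorm_mulVec_le (S * D) ub
    nlinarith [eunorm_nonneg ((S*D).mulVec ub), eunorm_nonneg ub,
      norm_nonneg (LinearMap.toContinuousLinearMap (Matrix.toEuclideanLin (S * D)))]
  -- γ² relation
  have hγ2 : l^2 * γ^2 = (1 - l) * N^2 := by
    rw [hγ, mul_pow, div_pow, Real.sq_sqrt h1l.le]
    field_simp
  -- put everything together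
  set V0 : ℝ := e ⬝ᵥ M.mulVec e with hV0
  have hVx : V xb x = V0 := by rw [hV]
  set U : ℝ := eunorm ub ^ 2 with hU
  rw [hVp, hexp, hVx]
  have hγ2U : l^2 * (γ^2 * U) = (1 - l) * (N^2 * U) := by
    have := congrArg (· * U) hγ2
    simpa [mul_assoc] using this
  have hP : l * (1 - l) * (q1 + 2*c12 + q2) ≤ l * (1 - 2*l) * V0 + (1 - l) * (N^2 * U) := by
    nlinarith [hyoung, mul_le_mul_of_nonneg_left hA1 hl0.le,
      mul_le_mul_of_nonneg_left hB2 h1l.le]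
  rw [show -(l / (1 - l)) * (V0 - γ^2 * U) = (-(l * (V0 - γ^2 * U))) / (1 - l) by ring,
    le_div_iff₀ h1l]
  nlinarith [hP, hγ2U, hl0]
end

section
/- Let 𝒰 = {u ∈ ℝ^m : F_u u ≤ f_u} be a polyhedron with rows F_{u,j}. Suppose ū, x̄, and e satisfy for all j: F_{u,j} R ū ≤ f_{u,j} − δ‖F_{u,j}‖₁ − ε‖F_{u,j} K M^{-1/2}‖, with ‖Q x̄‖_∞ ≤ δ and ‖e‖ ≤ ε. Then R ū + Q x̄ + K M^{-1/2} e ∈ 𝒰. -/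
open Matrix

/-- The square root of a positive semidefinite matrix, as defined in Mathlib of December 2024
(removed since; reinstated here with its old definition). -/
noncomputable def Matrix.PosSemidef.sqrt {n : Type*} [Fintype n] [DecidableEq n]
    {A : Matrix n n ℝ} (hA : A.PosSemidef) : Matrix n n ℝ :=
  (hA.1.eigenvectorUnitary : Matrix n n ℝ) * diagonal ((√·) ∘ hA.1.eigenvalues) *
    (star (hA.1.eigenvectorUnitary : Matrix n n ℝ))

lemma dotProduct_le_eunorm {n : ℕ} (v w : Fin n → ℝ) :
    v ⬝ᵥ w ≤ eunorm v * eunorm w := by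
  have h := real_inner_le_norm ((WithLp.equiv 2 (Fin n → ℝ)).symm v)
    ((WithLp.equiv 2 (Fin n → ℝ)).symm w)
  rw [EuclideanSpace.inner_eq_star_dotProduct] at h
  simpa [dotProduct, mul_comm, eunorm] using h

/-- tightened polyhedral input constraints guarantee
`Rū + Qx̄ + KM^{-1/2}e ∈ 𝒰`. -/
theorem stmt_13 {m mb nb n du : ℕ}
    (F_u : Matrix (Fin du) (Fin m) ℝ) (f_u : Fin du → ℝ)
    (R : Matrix (Fin m) (Fin mb) ℝ) (Q : Matrix (Fin m) (Fin nb) ℝ)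
    (K : Matrix (Fin m) (Fin n) ℝ)
    (M : Matrix (Fin n) (Fin n) ℝ) (hM : M.PosDef)
    (δ ε : ℝ)
    (ub : Fin mb → ℝ) (xb : Fin nb → ℝ) (e : Fin n → ℝ)
    (hu : ∀ j, F_u j ⬝ᵥ R.mulVec ub ≤
      f_u j - δ * (∑ i, |F_u j i|) -
        ε * eunorm (Matrix.vecMul (F_u j) (K * (hM.posSemidef.sqrt)⁻¹)))
    (hx : ∀ i, |Q.mulVec xb i| ≤ δ)
    (he : eunorm e ≤ ε) :
    ∀ j, F_u j ⬝ᵥ (R.mulVec ub + Q.mulVec xb +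
      (K * (hM.posSemidef.sqrt)⁻¹).mulVec e) ≤ f_u j := by
  intro j
  set A := K * (hM.posSemidef.sqrt)⁻¹
  have h1 : F_u j ⬝ᵥ Q.mulVec xb ≤ δ * (∑ i, |F_u j i|) := by
    rw [Finset.mul_sum]
    refine Finset.sum_le_sum fun i _ => ?_
    calc F_u j i * Q.mulVec xb i ≤ |F_u j i * Q.mulVec xb i| := le_abs_self _
      _ = |F_u j i| * |Q.mulVec xb i| := abs_mul _ _
      _ ≤ |F_u j i| * δ := by
          exact mul_le_mul_of_nonneg_left (hx i) (abs_nonneg _)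
      _ = δ * |F_u j i| := mul_comm _ _
  have h2 : F_u j ⬝ᵥ A.mulVec e ≤ ε * eunorm (Matrix.vecMul (F_u j) A) := by
    rw [dotProduct_mulVec]
    calc Matrix.vecMul (F_u j) A ⬝ᵥ e
        ≤ eunorm (Matrix.vecMul (F_u j) A) * eunorm e := dotProduct_le_eunorm _ _
      _ ≤ eunorm (Matrix.vecMul (F_u j) A) * ε :=
          mul_le_mul_of_nonneg_left he (eunorm_nonneg _)
      _ = ε * eunorm (Matrix.vecMul (F_u j) A) := mul_comm _ _
  have := hu j
  simp only [dotProduct_add]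
  linarith
end
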